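/- Let φ be a propositional formula on the variables x₁,…,xₙ and let D be a DNF, each of whose terms has no repeated variable, that is M-equivalent to φ. For a non-contradictory term γ of D, let v(γ) ∈ {−1,0,1}ⁿ be the ternary vector assigning 1 to each variable occurring positively in γ, −1 to each variable occurring negatively in γ, and 0 to all other variables. Then: (a) the K3-evaluation of φ at v(γ) equals 1 for every non-contradictory term γ of D; and (b) every binary vector b ∈ {−1,1}ⁿ at which φ evaluates to true is a refinement of v(γ) for some non-contradictory term γ of D (i.e., b agrees with v(γ) on all nonzero entries of v(γ)). -/
import Mathlib


/-- Propositional formulas over `n` variables, built from `¬`, `∧`, `∨`. -/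
inductive PropForm (n : ℕ) : Type where
  | var : Fin n → PropForm n
  | neg : PropForm n → PropForm n
  | conj : PropForm n → PropForm n → PropForm n
  | disj : PropForm n → PropForm n → PropForm n

namespace PropForm

/-- The multiple-valued semantics `M` over the integers:
`∧` is `min`, `∨` is `max`, `¬` is integer negation. -/
def evalM {n : ℕ} (v : Fin n → ℤ) : PropForm n → ℤ
  | var i => v i
  | neg φ => -(evalM v φ)
  | conj φ ψ => min (evalM v φ) (evalM v ψ)
  | disj φ ψ => max (evalM v φ) (evalM v ψ)

/-- The binary semantics `B₂` over `Bool`. -/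
def evalB {n : ℕ} (b : Fin n → Bool) : PropForm n → Bool
  | var i => b i
  | neg φ => !(evalB b φ)
  | conj φ ψ => evalB b φ && evalB b ψ
  | disj φ ψ => evalB b φ || evalB b ψ

end PropForm

/-- A literal: a variable together with a polarity (`true` = positive). -/
abbrev Lit (n : ℕ) := Fin n × Bool

/-- `M`-value of a literal under a valuation. -/
def litValM {n : ℕ} (v : Fin n → ℤ) (l : Lit n) : ℤ :=
  if l.2 then v l.1 else -(v l.1)

/-- Binary value of a literal under a binary valuation. -/
def litValB {n : ℕ} (b : Fin n → Bool) (l : Lit n) : Bool :=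
  if l.2 then b l.1 else !(b l.1)

/-- `M`-value of a conjunctive term (a list of literals), the minimum of the
literal values (for nonempty terms; the value on `[]` is a dummy). -/
def Term.evalM {n : ℕ} (v : Fin n → ℤ) : List (Lit n) → ℤ
  | [] => 0
  | [l] => litValM v l
  | l :: ls => min (litValM v l) (Term.evalM v ls)

/-- Binary value of a conjunctive term: the conjunction of its literal values. -/
def Term.evalB {n : ℕ} (b : Fin n → Bool) (t : List (Lit n)) : Bool :=
  t.all (litValB b)

/-- `M`-value of a DNF (a list of conjunctive terms), the maximum of the
term values (for nonempty DNFs; the value on `[]` is a dummy). -/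
def DNF.evalM {n : ℕ} (v : Fin n → ℤ) : List (List (Lit n)) → ℤ
  | [] => 0
  | [t] => Term.evalM v t
  | t :: ts => max (Term.evalM v t) (DNF.evalM v ts)

/-- A term is contradictory if it contains both `x` and `¬x` for some variable. -/
def Contra {n : ℕ} (t : List (Lit n)) : Prop :=
  ∃ i : Fin n, ((i, true) : Lit n) ∈ t ∧ ((i, false) : Lit n) ∈ t

lemma evalM_lipschitz {n : ℕ} (φ : PropForm n) (u v : Fin n → ℤ) (c : ℤ)
    (h : ∀ i, |u i - v i| ≤ c) :
    |PropForm.evalM u φ - PropForm.evalM v φ| ≤ c := by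
  induction φ with
  | var i => exact h i
  | neg φ ih => simp only [PropForm.evalM]; rw [abs_le] at ih ⊢; omega
  | conj φ ψ ih1 ih2 => simp only [PropForm.evalM]; rw [abs_le] at ih1 ih2 ⊢; omega
  | disj φ ψ ih1 ih2 => simp only [PropForm.evalM]; rw [abs_le] at ih1 ih2 ⊢; omega

lemma evalM_zero {n : ℕ} (φ : PropForm n) : PropForm.evalM (fun _ => 0) φ = 0 := by
  induction φ with
  | var i => rfl
  | neg φ ih => simp [PropForm.evalM, ih]
  | conj φ ψ ih1 ih2 => simp [PropForm.evalM, ih1, ih2]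
  | disj φ ψ ih1 ih2 => simp [PropForm.evalM, ih1, ih2]

lemma abs_evalM_le {n : ℕ} (φ : PropForm n) (v : Fin n → ℤ) (c : ℤ)
    (h : ∀ i, |v i| ≤ c) : |PropForm.evalM v φ| ≤ c := by
  have := evalM_lipschitz φ v (fun _ => 0) c (by simpa using h)
  simpa [evalM_zero] using this

lemma evalM_two_smul {n : ℕ} (φ : PropForm n) (v : Fin n → ℤ) :
    PropForm.evalM (fun i => 2 * v i) φ = 2 * PropForm.evalM v φ := by
  induction φ with
  | var i => rfl
  | neg φ ih => simp only [PropForm.evalM, ih]; ring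
  | conj φ ψ ih1 ih2 => simp only [PropForm.evalM, ih1, ih2]; omega
  | disj φ ψ ih1 ih2 => simp only [PropForm.evalM, ih1, ih2]; omega

lemma term_le_lit {n : ℕ} (v : Fin n → ℤ) (l : Lit n) (t : List (Lit n)) (hl : l ∈ t) :
    Term.evalM v t ≤ litValM v l := by
  induction t with
  | nil => simp at hl
  | cons a ts ih =>
    cases ts with
    | nil => simp at hl; subst hl; exact le_refl _
    | cons b ts' =>
      have e : Term.evalM v (a :: b :: ts') =
          min (litValM v a) (Term.evalM v (b :: ts')) := rfl
      rw [e]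
      rcases List.mem_cons.mp hl with h | h
      · subst h; exact min_le_left _ _
      · exact le_trans (min_le_right _ _) (ih h)

lemma le_term {n : ℕ} (v : Fin n → ℤ) (c : ℤ) (t : List (Lit n)) (ht : t ≠ [])
    (h : ∀ l ∈ t, c ≤ litValM v l) : c ≤ Term.evalM v t := by
  induction t with
  | nil => exact absurd rfl ht
  | cons a ts ih =>
    cases ts with
    | nil => exact h a (by simp)
    | cons b ts' =>
      have e : Term.evalM v (a :: b :: ts') =
          min (litValM v a) (Term.evalM v (b :: ts')) := rfl
      rw [e, le_min_iff]
      exact ⟨h a (by simp), ih (by simp) (fun l hl => h l (List.mem_cons_of_mem _ hl))⟩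

lemma term_le_dnf {n : ℕ} (v : Fin n → ℤ) (t : List (Lit n)) (D : List (List (Lit n)))
    (ht : t ∈ D) : Term.evalM v t ≤ DNF.evalM v D := by
  induction D with
  | nil => simp at ht
  | cons a ts ih =>
    cases ts with
    | nil => simp at ht; subst ht; exact le_refl _
    | cons b ts' =>
      have e : DNF.evalM v (a :: b :: ts') =
          max (Term.evalM v a) (DNF.evalM v (b :: ts')) := rfl
      rw [e]
      rcases List.mem_cons.mp ht with h | h
      · subst h; exact le_max_left _ _
      · exact le_trans (ih h) (le_max_right _ _)

lemma dnf_le {n : ℕ} (v : Fin n → ℤ) (c : ℤ) (D : List (List (Lit n))) (hD : D ≠ [])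
    (h : ∀ t ∈ D, Term.evalM v t ≤ c) : DNF.evalM v D ≤ c := by
  induction D with
  | nil => exact absurd rfl hD
  | cons a ts ih =>
    cases ts with
    | nil => exact h a (by simp)
    | cons b ts' =>
      have e : DNF.evalM v (a :: b :: ts') =
          max (Term.evalM v a) (DNF.evalM v (b :: ts')) := rfl
      rw [e, max_le_iff]
      exact ⟨h a (by simp), ih (by simp) (fun t htt => h t (List.mem_cons_of_mem _ htt))⟩

/-- let `D` be a DNF, with no repeated variable in any term,
which is `M`-equivalent to `φ`, and for a non-contradictory term `γ` let `w γ`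
be the ternary vector assigning `1`/`-1` to the positive/negative variables of
`γ` and `0` elsewhere. Then (a) the `K₃`-evaluation of `φ` at `w γ` is `1` for
every non-contradictory term `γ` of `D`, and (b) every binary vector
`b ∈ {-1,1}ⁿ` satisfying `φ` refines `w γ` for some non-contradictory term `γ`
of `D`. -/
theorem ternary_cover {n : ℕ} (φ : PropForm n) (D : List (List (Lit n)))
    (hDne : D ≠ []) (hDt : ∀ t ∈ D, t ≠ [])
    (hnd : ∀ t ∈ D, (t.map Prod.fst).Nodup)
    (hD : ∀ v : Fin n → ℤ, (∀ i, v i ≠ 0) → DNF.evalM v D = PropForm.evalM v φ)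
    (w : List (Lit n) → Fin n → ℤ)
    (hw : ∀ (γ : List (Lit n)) (i : Fin n), w γ i =
      if ((i, true) : Lit n) ∈ γ then 1
      else if ((i, false) : Lit n) ∈ γ then -1 else 0) :
    (∀ γ ∈ D, ¬ Contra γ → PropForm.evalM (w γ) φ = 1) ∧
    (∀ b : Fin n → ℤ, (∀ i, b i = 1 ∨ b i = -1) → 0 < PropForm.evalM b φ →
      ∃ γ ∈ D, ¬ Contra γ ∧ ∀ i : Fin n, w γ i ≠ 0 → b i = w γ i) := by
  constructor
  · intro γ hγ hnc
    -- the doubled valuation, with zeros replaced by 1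
    set v : Fin n → ℤ := fun i => if w γ i = 0 then 1 else 2 * w γ i with hv
    have hvne : ∀ i, v i ≠ 0 := by
      intro i; simp only [hv]; split
      · exact one_ne_zero
      · rename_i h; exact fun hc => h (by omega)
    -- each literal of γ has value 2 under v
    have hlit : ∀ l ∈ γ, (2 : ℤ) ≤ litValM v l := by
      rintro ⟨i, s⟩ hl
      cases s with
      | true =>
        have hwi : w γ i = 1 := by rw [hw]; simp [hl]
        simp [litValM, hv, hwi]
      | false =>
        have hnt : ((i, true) : Lit n) ∉ γ := fun h => hnc ⟨i, h, hl⟩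
        have hwi : w γ i = -1 := by rw [hw]; simp [hl, hnt]
        simp [litValM, hv, hwi]
    have h2 : (2 : ℤ) ≤ PropForm.evalM v φ := by
      rw [← hD v hvne]
      exact le_trans (le_term v 2 γ (hDt γ hγ) hlit) (term_le_dnf v γ D hγ)
    have hub : |PropForm.evalM v φ| ≤ 2 := by
      apply abs_evalM_le
      intro i; simp only [hv]; split
      · norm_num
      · rename_i h
        have := hw γ i
        rw [abs_le]
        split at this <;> [skip; split at this] <;> omega
    have hlip : |PropForm.evalM v φ - PropForm.evalM (fun i => 2 * w γ i) φ| ≤ 1 := by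
      apply evalM_lipschitz
      intro i; simp only [hv]; split
      · rename_i h; rw [h]; norm_num
      · simp
    rw [evalM_two_smul] at hlip
    rw [abs_le] at hub hlip
    omega
  · intro b hb hpos
    have hbne : ∀ i, b i ≠ 0 := fun i => by rcases hb i with h | h <;> omega
    have hDb : 0 < DNF.evalM b D := by rw [hD b hbne]; exact hpos
    -- find a term with positive value
    have hex : ∃ γ ∈ D, 0 < Term.evalM b γ := by
      by_contra hcon
      push_neg at hcon
      exact absurd (dnf_le b 0 D hDne (fun t ht => hcon t ht)) (by omega)
    obtain ⟨γ, hγ, hγpos⟩ := hex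
    have hlit : ∀ l ∈ γ, 0 < litValM b l :=
      fun l hl => lt_of_lt_of_le hγpos (term_le_lit b l γ hl)
    have hpt : ∀ i : Fin n, ((i, true) : Lit n) ∈ γ → b i = 1 := by
      intro i hi
      have := hlit _ hi
      simp [litValM] at this
      rcases hb i with h | h <;> omega
    have hpf : ∀ i : Fin n, ((i, false) : Lit n) ∈ γ → b i = -1 := by
      intro i hi
      have := hlit _ hi
      simp [litValM] at this
      rcases hb i with h | h <;> omega
    refine ⟨γ, hγ, ?_, ?_⟩
    · rintro ⟨i, h1, h2⟩
      have := hpt i h1; have := hpf i h2; omega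
    · intro i hne
      rw [hw] at hne ⊢
      split_ifs at hne ⊢ with h1 h2
      · exact hpt i h1
      · exact hpf i h2
      · exact absurd rfl hne
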